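/- Every mixed quantum strategy μ is equivalent to a mixed quantum strategy supported on at most four points; moreover these points can be taken to be four unit quaternions q₁, q₂, q₃, q₄ forming an orthonormal basis of ℍ ≅ ℝ⁴ (with respect to the standard inner product ⟨p,q⟩ = Σ_t π_t(p)π_t(q)). -/

import Mathlib

noncomputable section

open MeasureTheory

local notation "ℍ" => Quaternion ℝ

instance : MeasurableSpace (Quaternion ℝ) := borel _
instance : BorelSpace (Quaternion ℝ) := ⟨rfl⟩

/-- The four real coordinates of a quaternion: `p = π₁(p) + π₂(p)i + π₃(p)j + π₄(p)k`. -/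
def piQ (t : Fin 4) (p : ℍ) : ℝ := ![p.re, p.imI, p.imJ, p.imK] t

/-- The standard inner product on ℍ ≅ ℝ⁴. -/
def qinner (p q : ℍ) : ℝ := ∑ t : Fin 4, piQ t p * piQ t q

/-- The quaternions `i`, `j`, `k`. -/
def qI : ℍ := ⟨0, 1, 0, 0⟩
def qJ : ℍ := ⟨0, 0, 1, 0⟩
def qK : ℍ := ⟨0, 0, 0, 1⟩

/-- A mixed quantum strategy: a Borel probability measure on the unit quaternions. -/
def IsMixed (μ : Measure ℍ) : Prop :=
  IsProbabilityMeasure μ ∧ μ {p : ℍ | ‖p‖ = 1} = 1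

/-- Quantum payoff with payoff vector `X`: `P^Q(p,q) = Σ_t π_t(pq)² X_t`. -/
def payoff (X : Fin 4 → ℝ) (p q : ℍ) : ℝ :=
  ∑ t : Fin 4, (piQ t (p * q)) ^ 2 * X t

/-- Expected payoff of a pair of mixed strategies. -/
def payoffM (X : Fin 4 → ℝ) (ν μ : Measure ℍ) : ℝ :=
  ∫ p, ∫ q, payoff X p q ∂μ ∂ν

/-- Mixed-strategy Nash equilibrium of the quantum game with payoff vectors `X`, `Y`. -/
def IsNash (X Y : Fin 4 → ℝ) (ν μ : Measure ℍ) : Prop :=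
  IsMixed ν ∧ IsMixed μ ∧
    (∀ ν' : Measure ℍ, IsMixed ν' → payoffM X ν' μ ≤ payoffM X ν μ) ∧
    (∀ μ' : Measure ℍ, IsMixed μ' → payoffM Y ν μ' ≤ payoffM Y ν μ)

/-- Equivalence of mixed quantum strategies. -/
def StratEquiv (μ μ' : Measure ℍ) : Prop :=
  ∀ p : ℍ, ‖p‖ = 1 → ∀ t : Fin 4,
    ∫ q, (piQ t (p * q)) ^ 2 ∂μ = ∫ q, (piQ t (p * q)) ^ 2 ∂μ'

/-- Equivalence of pairs of mixed strategies: `(ν,μ) ∼ (ν',μ')` iff there is a unit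
quaternion `u` with `ν' ∼ ν·u` and `μ' ∼ u⁻¹·μ`. -/
def PairEquiv (ν μ ν' μ' : Measure ℍ) : Prop :=
  ∃ u : ℍ, ‖u‖ = 1 ∧
    StratEquiv (Measure.map (fun p => p * u) ν) ν' ∧
    StratEquiv (Measure.map (fun q => u⁻¹ * q) μ) μ'

/-- A generic two-by-two game: all payoffs distinct and all pairwise sums distinct. -/
def Generic (X Y : Fin 4 → ℝ) : Prop :=
  Function.Injective X ∧ Function.Injective Y ∧
    (∀ s t s' t' : Fin 4, s < t → s' < t' → X s + X t = X s' + X t' → s = s' ∧ t = t') ∧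
    (∀ s t s' t' : Fin 4, s < t → s' < t' → Y s + Y t = Y s' + Y t' → s = s' ∧ t = t')

/-- `K(p) = π₁(p)π₂(p)π₃(p)π₄(p)`. -/
def K (p : ℍ) : ℝ := p.re * p.imI * p.imJ * p.imK

/-- Intertwined quadruple of quaternions. -/
def Intertwined (p q r s : ℍ) : Prop :=
  ∃ α : ℝ, α ≠ 0 ∧ ∀ X Y : ℝ, α * K (X • p + Y • q) = K (X • r + Y • s)

/-- Fully intertwined quadruple of quaternions. -/
def FullyIntertwined (p q r s : ℍ) : Prop :=
  Intertwined p q r s ∧ Intertwined p r q s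

/-- `p` is an optimal response for Player One to the mixed strategy `μ`. -/
def Optimal₁ (X : Fin 4 → ℝ) (μ : Measure ℍ) (p : ℍ) : Prop :=
  ‖p‖ = 1 ∧ ∀ p' : ℍ, ‖p'‖ = 1 → ∫ q, payoff X p' q ∂μ ≤ ∫ q, payoff X p q ∂μ

/-- `q` is an optimal response for Player Two to the mixed strategy `ν`. -/
def Optimal₂ (Y : Fin 4 → ℝ) (ν : Measure ℍ) (q : ℍ) : Prop :=
  ‖q‖ = 1 ∧ ∀ q' : ℍ, ‖q'‖ = 1 → ∫ p, payoff Y p q' ∂ν ≤ ∫ p, payoff Y p q ∂ν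
section Helpers

lemma piQ_continuous (t : Fin 4) : Continuous (piQ t) := by
  fin_cases t <;> simp only [piQ, Matrix.cons_val_zero, Matrix.cons_val_one, Matrix.head_cons,
    Matrix.cons_val_two, Matrix.tail_cons, Matrix.cons_val_three] <;>
    first
      | exact Quaternion.continuous_re
      | exact Quaternion.continuous_imI
      | exact Quaternion.continuous_imJ
      | exact Quaternion.continuous_imK

lemma sum_piQ_sq (q : ℍ) : ∑ t : Fin 4, piQ t q ^ 2 = ‖q‖ ^ 2 := by
  have h : ‖q‖ ^ 2 = Quaternion.normSq q := by
    rw [sq, ← Quaternion.normSq_eq_norm_mul_self]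
  rw [h, Quaternion.normSq_def', Fin.sum_univ_four]
  simp [piQ]

lemma abs_piQ_le (t : Fin 4) (q : ℍ) : |piQ t q| ≤ ‖q‖ := by
  have h2 : piQ t q ^ 2 ≤ ‖q‖ ^ 2 := by
    rw [← sum_piQ_sq]
    exact Finset.single_le_sum (f := fun i => piQ i q ^ 2) (fun i _ => sq_nonneg _) (Finset.mem_univ t)
  have := Real.sqrt_le_sqrt h2
  rwa [Real.sqrt_sq_eq_abs, Real.sqrt_sq (norm_nonneg q)] at this

lemma ae_norm_one {μ : Measure ℍ} (hμ : IsMixed μ) : ∀ᵐ q ∂μ, ‖q‖ = 1 := by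
  have : IsProbabilityMeasure μ := hμ.1
  rw [MeasureTheory.ae_iff]
  have hms : MeasurableSet {p : ℍ | ‖p‖ = 1} :=
    measurableSet_eq_fun continuous_norm.measurable measurable_const
  have hc := measure_compl hms (measure_ne_top μ _)
  rw [hμ.2, measure_univ, tsub_self] at hc
  simpa [Set.compl_setOf] using hc

lemma integrable_piQ_mul {μ : Measure ℍ} (hμ : IsMixed μ) (s t : Fin 4) :
    Integrable (fun q => piQ s q * piQ t q) μ := by
  have : IsProbabilityMeasure μ := hμ.1
  refine ⟨(((piQ_continuous s).mul (piQ_continuous t)).measurable).aestronglyMeasurable,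
    MeasureTheory.HasFiniteIntegral.of_bounded (C := 1) ?_⟩
  filter_upwards [ae_norm_one hμ] with q hq
  rw [Real.norm_eq_abs, abs_mul]
  calc |piQ s q| * |piQ t q| ≤ ‖q‖ * ‖q‖ :=
        mul_le_mul (abs_piQ_le s q) (abs_piQ_le t q) (abs_nonneg _) (norm_nonneg _)
    _ = 1 := by rw [hq]; ring

lemma integral_sq_linear (m : Measure ℍ)
    (hint : ∀ s t : Fin 4, Integrable (fun q => piQ s q * piQ t q) m) (a : Fin 4 → ℝ) :
    ∫ q, (∑ s, a s * piQ s q) ^ 2 ∂m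
      = ∑ s, ∑ t, a s * a t * ∫ q, piQ s q * piQ t q ∂m := by
  have h1 : ∀ q : ℍ, (∑ s, a s * piQ s q) ^ 2
      = ∑ s, ∑ t, a s * a t * (piQ s q * piQ t q) := by
    intro q
    rw [sq, Finset.sum_mul_sum]
    exact Finset.sum_congr rfl fun s _ => Finset.sum_congr rfl fun t _ => by ring
  simp_rw [h1]
  rw [MeasureTheory.integral_finset_sum]
  · refine Finset.sum_congr rfl fun s _ => ?_
    rw [MeasureTheory.integral_finset_sum]
    · exact Finset.sum_congr rfl fun t _ => MeasureTheory.integral_const_mul _ _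
    · exact fun t _ => (hint s t).const_mul _
  · exact fun s _ => MeasureTheory.integrable_finset_sum _ fun t _ => (hint s t).const_mul _

/-- Coefficients of left multiplication by `p` in coordinates. -/
def lcoef (p : ℍ) : Fin 4 → Fin 4 → ℝ :=
  ![![p.re, -p.imI, -p.imJ, -p.imK],
    ![p.imI, p.re, -p.imK, p.imJ],
    ![p.imJ, p.imK, p.re, -p.imI],
    ![p.imK, -p.imJ, p.imI, p.re]]

lemma piQ_mul (p q : ℍ) (t : Fin 4) :
    piQ t (p * q) = ∑ s, lcoef p t s * piQ s q := by
  fin_cases t <;>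
    simp [piQ, lcoef, Fin.sum_univ_four, Quaternion.re_mul, Quaternion.imI_mul,
      Quaternion.imJ_mul, Quaternion.imK_mul] <;> ring

lemma integrable_dirac' (g : ℍ → ℝ) (hg : Continuous g) (x : ℍ) :
    Integrable g (Measure.dirac x) := by
  refine ⟨hg.measurable.aestronglyMeasurable, ?_⟩
  rw [MeasureTheory.HasFiniteIntegral, MeasureTheory.lintegral_dirac]
  exact ENNReal.coe_lt_top

lemma integral_sum_smul_dirac (l : Fin 4 → ℝ) (hl : ∀ i, 0 ≤ l i) (Q : Fin 4 → ℍ)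
    (g : ℍ → ℝ) (hg : Continuous g) :
    ∫ q, g q ∂(∑ i, ENNReal.ofReal (l i) • Measure.dirac (Q i)) = ∑ i, l i * g (Q i) := by
  rw [MeasureTheory.integral_finset_sum_measure]
  · refine Finset.sum_congr rfl fun i _ => ?_
    rw [MeasureTheory.integral_smul_measure, MeasureTheory.integral_dirac,
      ENNReal.toReal_ofReal (hl i), smul_eq_mul]
  · exact fun i _ => (integrable_dirac' g hg (Q i)).smul_measure ENNReal.ofReal_ne_top

end Helpers

/-- Every mixed quantum strategy is equivalent to one supported on (at most)
four points, which may be taken to be four pairwise orthogonal unit quaternions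
(an orthonormal basis of ℍ ≅ ℝ⁴). -/
theorem equiv_four_point_support (μ : Measure ℍ) (hμ : IsMixed μ) :
    ∃ (q : Fin 4 → ℍ) (ν : Measure ℍ),
      (∀ i, ‖q i‖ = 1) ∧ (∀ i j, i ≠ j → qinner (q i) (q j) = 0) ∧
      IsMixed ν ∧ StratEquiv μ ν ∧ ν (Set.range q) = 1 := by
  classical
  have hprob : IsProbabilityMeasure μ := hμ.1
  set M : Matrix (Fin 4) (Fin 4) ℝ :=
    Matrix.of fun s t => ∫ q, piQ s q * piQ t q ∂μ with hMdef
  have hMapp : ∀ s t, M s t = ∫ q, piQ s q * piQ t q ∂μ := fun s t => rfl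
  have hHerm : M.IsHermitian := by
    ext s t
    simp only [Matrix.conjTranspose_apply, star_trivial, hMapp]
    simp_rw [mul_comm]
  have hPSD : M.PosSemidef := by
    refine Matrix.PosSemidef.of_dotProduct_mulVec_nonneg hHerm fun x => ?_
    have hkey := integral_sq_linear μ (integrable_piQ_mul hμ) x
    have hdp : dotProduct (star x) (M.mulVec x) = ∑ s, ∑ t, x s * x t * M s t := by
      simp only [dotProduct, Matrix.mulVec, Pi.star_apply, star_trivial,
        Finset.mul_sum]
      exact Finset.sum_congr rfl fun s _ => Finset.sum_congr rfl fun t _ => by ring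
    rw [hdp]
    simp_rw [hMapp]
    rw [← hkey]
    exact MeasureTheory.integral_nonneg fun q => sq_nonneg _
  set lam : Fin 4 → ℝ := hHerm.eigenvalues with hlamdef
  have hlam0 : ∀ i, 0 ≤ lam i := fun i => hPSD.eigenvalues_nonneg i
  set v : Fin 4 → Fin 4 → ℝ := fun i => ⇑(hHerm.eigenvectorBasis i) with hvdef
  have horth : ∀ i j, ∑ s, v i s * v j s = (if i = j then (1 : ℝ) else 0) := by
    intro i j
    have h := (orthonormal_iff_ite.mp hHerm.eigenvectorBasis.orthonormal) i j
    rw [PiLp.inner_apply] at h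
    simpa [hvdef, mul_comm] using h
  have hspec : ∀ s t, M s t = ∑ i, lam i * v i s * v i t := by
    intro s t
    conv_lhs => rw [hHerm.spectral_theorem]
    simp only [Unitary.conjStarAlgAut_apply, Matrix.mul_apply, Matrix.mul_diagonal, Matrix.star_apply, star_trivial,
      Matrix.IsHermitian.eigenvectorUnitary_apply, Function.comp_apply, RCLike.ofReal_real_eq_id,
      id_eq, Matrix.diagonal_apply, Finset.sum_ite_eq, Finset.mem_univ, if_true]
    refine Finset.sum_congr rfl fun i _ => ?_
    simp only [hlamdef, hvdef, mul_ite, mul_zero, Finset.sum_ite_eq', Finset.mem_univ, if_true]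
    ring
  have htr : ∑ s, M s s = 1 := by
    simp_rw [hMapp]
    rw [← MeasureTheory.integral_finset_sum _ (fun s _ => integrable_piQ_mul hμ s s)]
    have hone : ∀ᵐ q ∂μ, (∑ s, piQ s q * piQ s q) = (fun _ : ℍ => (1 : ℝ)) q := by
      filter_upwards [ae_norm_one hμ] with q hq
      simp_rw [← sq]
      rw [sum_piQ_sq, hq, one_pow]
    rw [MeasureTheory.integral_congr_ae hone]
    simp
  have hsum : ∑ i, lam i = 1 := by
    have h1 : ∑ i, lam i = ∑ s, M s s := by
      calc ∑ i, lam i = ∑ i, lam i * ∑ s, v i s * v i s := by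
            refine Finset.sum_congr rfl fun i _ => ?_
            rw [horth i i, if_pos rfl, mul_one]
        _ = ∑ i, ∑ s, lam i * v i s * v i s := by
            refine Finset.sum_congr rfl fun i _ => ?_
            rw [Finset.mul_sum]
            exact Finset.sum_congr rfl fun s _ => by ring
        _ = ∑ s, ∑ i, lam i * v i s * v i s := Finset.sum_comm
        _ = ∑ s, M s s := Finset.sum_congr rfl fun s _ => (hspec s s).symm
    rw [h1, htr]
  set Q : Fin 4 → ℍ := fun i => ⟨v i 0, v i 1, v i 2, v i 3⟩ with hQdef
  have hpiQ : ∀ i t, piQ t (Q i) = v i t := by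
    intro i t
    fin_cases t <;> rfl
  have hnorm : ∀ i, ‖Q i‖ = 1 := by
    intro i
    have h2 : ‖Q i‖ ^ 2 = 1 ^ 2 := by
      rw [← sum_piQ_sq, one_pow]
      have := horth i i
      rw [if_pos rfl] at this
      rw [← this]
      exact Finset.sum_congr rfl fun t _ => by rw [hpiQ, sq]
    exact (pow_left_inj₀ (norm_nonneg _) zero_le_one two_ne_zero).mp h2
  have hqin : ∀ i j, i ≠ j → qinner (Q i) (Q j) = 0 := by
    intro i j hij
    unfold qinner
    simp_rw [hpiQ]
    rw [horth i j, if_neg hij]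
  set ν : Measure ℍ := ∑ i, ENNReal.ofReal (lam i) • Measure.dirac (Q i) with hνdef
  have hνapp : ∀ S : Set ℍ, (∀ i, Q i ∈ S) → ν S = 1 := by
    intro S hS
    rw [hνdef, Measure.finset_sum_apply]
    have : ∀ i : Fin 4, (ENNReal.ofReal (lam i) • Measure.dirac (Q i)) S
        = ENNReal.ofReal (lam i) := by
      intro i
      rw [Measure.smul_apply, Measure.dirac_apply_of_mem (hS i), smul_eq_mul, mul_one]
    rw [Finset.sum_congr rfl fun i _ => this i,
      ← ENNReal.ofReal_sum_of_nonneg fun i _ => hlam0 i, hsum, ENNReal.ofReal_one]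
  have hνprob : IsProbabilityMeasure ν := ⟨hνapp Set.univ fun i => Set.mem_univ _⟩
  have hmixed : IsMixed ν := ⟨hνprob, hνapp _ fun i => hnorm i⟩
  refine ⟨Q, ν, hnorm, hqin, hmixed, ?_, hνapp _ fun i => Set.mem_range_self i⟩
  intro p hp t
  have hrw : ∀ m : Measure ℍ, ∫ q, piQ t (p * q) ^ 2 ∂m
      = ∫ q, (∑ s, lcoef p t s * piQ s q) ^ 2 ∂m := by
    intro m
    refine MeasureTheory.integral_congr_ae (Filter.Eventually.of_forall fun q => ?_)
    simp only [piQ_mul]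
  rw [hrw μ, hrw ν, integral_sq_linear μ (integrable_piQ_mul hμ), hνdef]
  have hg : Continuous fun q : ℍ => (∑ s, lcoef p t s * piQ s q) ^ 2 := by
    apply Continuous.pow
    exact continuous_finset_sum _ fun s _ => (continuous_const.mul (piQ_continuous s))
  rw [integral_sum_smul_dirac lam hlam0 Q _ hg]
  simp_rw [hpiQ]
  set a : Fin 4 → ℝ := lcoef p t
  calc ∑ s, ∑ u, a s * a u * ∫ q, piQ s q * piQ u q ∂μ
      = ∑ s, ∑ u, ∑ i, a s * a u * (lam i * v i s * v i u) := by
        refine Finset.sum_congr rfl fun s _ => Finset.sum_congr rfl fun u _ => ?_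
        rw [← hMapp, hspec, Finset.mul_sum]
    _ = ∑ s, ∑ i, ∑ u, a s * a u * (lam i * v i s * v i u) :=
        Finset.sum_congr rfl fun s _ => Finset.sum_comm
    _ = ∑ i, ∑ s, ∑ u, a s * a u * (lam i * v i s * v i u) := Finset.sum_comm
    _ = ∑ i, lam i * (∑ s, a s * v i s) ^ 2 := by
        refine Finset.sum_congr rfl fun i _ => ?_
        rw [sq, Finset.sum_mul_sum, Finset.mul_sum]
        refine Finset.sum_congr rfl fun s _ => ?_
        rw [Finset.mul_sum]
        exact Finset.sum_congr rfl fun u _ => by ring
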